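/- Let A be a Hermitian operator on a finite-dimensional complex Hilbert space and x a unit vector with P = x⊗x. Then there exists K > 0 such that for all t ≥ K, (⟨Ax,x⟩ − t^{−1/2})P + t(P − I) ≤ A ≤ (⟨Ax,x⟩ + t^{−1/2})P + (t/2)(I − P), where ≤ is the Löwner order on Hermitian operators. -/

import Mathlib

open Matrix Filter
open scoped ComplexOrder

/-- Functional calculus for Hermitian matrices: apply `f` to the eigenvalues. -/
noncomputable def mfun {d : ℕ} (f : ℝ → ℝ) (A : Matrix (Fin d) (Fin d) ℂ) :
    Matrix (Fin d) (Fin d) ℂ :=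
  if hA : A.IsHermitian then
    (hA.eigenvectorUnitary : Matrix (Fin d) (Fin d) ℂ) *
      Matrix.diagonal (fun i => (f (hA.eigenvalues i) : ℂ)) *
      star (hA.eigenvectorUnitary : Matrix (Fin d) (Fin d) ℂ)
  else 0

noncomputable def mexp {d : ℕ} (A : Matrix (Fin d) (Fin d) ℂ) : Matrix (Fin d) (Fin d) ℂ :=
  mfun Real.exp A

noncomputable def mlog {d : ℕ} (A : Matrix (Fin d) (Fin d) ℂ) : Matrix (Fin d) (Fin d) ℂ :=
  mfun Real.log A

/-- The Löwner order: `A ≤ B` iff `B - A` is positive semidefinite. -/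
def loewnerLE {d : ℕ} (A B : Matrix (Fin d) (Fin d) ℂ) : Prop :=
  (B - A).PosSemidef

/-- The quadratic form ⟨Ax, x⟩. -/
noncomputable def qf {d : ℕ} (A : Matrix (Fin d) (Fin d) ℂ) (x : Fin d → ℂ) : ℂ :=
  star x ⬝ᵥ A.mulVec x

/-- The rank-one projection x ⊗ x. -/
noncomputable def rankOneProj {d : ℕ} (x : Fin d → ℂ) : Matrix (Fin d) (Fin d) ℂ :=
  Matrix.vecMulVec x (star x)

lemma key_ineq (M t p r : ℝ) (hM : 1 ≤ M) (ht : 16*M^4 + 4*M ≤ t)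
    (hp : 0 ≤ p) (hr : 0 ≤ r) :
    2*(M*p*r) + M*r^2 ≤ (Real.sqrt t)⁻¹ * p^2 + (t/2)*r^2 := by
  have hM0 : (0:ℝ) < M := lt_of_lt_of_le one_pos hM
  have ht0 : (0:ℝ) < t := lt_of_lt_of_le (by positivity) ht
  have hu0 : 0 < Real.sqrt t := Real.sqrt_pos.2 ht0
  set u := Real.sqrt t with hu
  have hu2 : u^2 = t := Real.sq_sqrt ht0.le
  have hu4 : 4*M^2 ≤ u := by
    have h := Real.sqrt_le_sqrt (show (4*M^2)^2 ≤ t by nlinarith)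
    rwa [Real.sqrt_sq (by positivity)] at h
  have key : u*(2*(M*p*r) + M*r^2) ≤ p^2 + u^3*r^2/2 := by
    nlinarith [sq_nonneg (p - M*r*u),
      mul_nonneg (mul_nonneg (mul_nonneg hr hr) (mul_pos hu0 hu0).le) (sub_nonneg.2 hu4),
      mul_nonneg (mul_nonneg (mul_nonneg hr hr) hu0.le)
        (sub_nonneg.2 (show 4*M ≤ u^2 by nlinarith))]
  have h2 : u * (u⁻¹ * p^2 + (t/2)*r^2) = p^2 + u^3*r^2/2 := by
    rw [← hu2]; field_simp
  exact le_of_mul_le_mul_left (by rw [h2]; exact key) hu0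

lemma herm_conj {d : ℕ} {A : Matrix (Fin d) (Fin d) ℂ} (hA : A.IsHermitian) (u u' : Fin d → ℂ) :
    (starRingEnd ℂ) (star u ⬝ᵥ A *ᵥ u') = star u' ⬝ᵥ A *ᵥ u := by
  show star (star u ⬝ᵥ A *ᵥ u') = _
  rw [Matrix.star_dotProduct, star_star, Matrix.star_mulVec, hA.eq, ← Matrix.dotProduct_mulVec]

lemma rankOne_mulVec {d : ℕ} (x v : Fin d → ℂ) :
    (Matrix.vecMulVec x (star x)) *ᵥ v = (star x ⬝ᵥ v) • x := by
  ext i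
  simp only [Matrix.mulVec, Matrix.vecMulVec_apply, dotProduct, Pi.smul_apply, smul_eq_mul,
    Finset.sum_mul, Pi.star_apply]
  exact Finset.sum_congr rfl fun j _ => by ring

lemma quad_decomp {d : ℕ} (A : Matrix (Fin d) (Fin d) ℂ) (hA : A.IsHermitian)
    (x : Fin d → ℂ) (hx : star x ⬝ᵥ x = 1) :
    ∃ M : ℝ, 1 ≤ M ∧ ∀ v : Fin d → ℂ, ∃ p r zre ere : ℝ, 0 ≤ p ∧ 0 ≤ r ∧
      |zre| ≤ M*p*r ∧ |ere| ≤ M*r^2 ∧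
      star v ⬝ᵥ (A *ᵥ v) = (star x ⬝ᵥ A *ᵥ x) * ((p^2 : ℝ) : ℂ) + ((2*zre + ere : ℝ) : ℂ) ∧
      star v ⬝ᵥ ((Matrix.vecMulVec x (star x)) *ᵥ v) = ((p^2 : ℝ) : ℂ) ∧
      star v ⬝ᵥ v = ((p^2 + r^2 : ℝ) : ℂ) := by
  classical
  set ι : (Fin d → ℂ) → EuclideanSpace ℂ (Fin d) := fun u => (WithLp.equiv 2 (Fin d → ℂ)).symm u with hι
  set T := LinearMap.toContinuousLinearMap (Matrix.toEuclideanLin A) with hT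
  have hinner : ∀ u u' : Fin d → ℂ, (inner ℂ (ι u) (ι u') : ℂ) = star u ⬝ᵥ u' := fun u u' =>
    (EuclideanSpace.inner_toLp_toLp u u').trans (dotProduct_comm _ _)
  refine ⟨‖T‖ + 1, by linarith [norm_nonneg T], fun v => ?_⟩
  set c := star x ⬝ᵥ v with hc
  set w := v - c • x with hwdef
  have hv : v = c • x + w := by rw [hwdef, add_comm, sub_add_cancel]
  have hw0 : star x ⬝ᵥ w = 0 := by
    simp [hwdef, dotProduct_sub, dotProduct_smul, hx, smul_eq_mul, ← hc]
  have hw0' : star w ⬝ᵥ x = 0 := by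
    rw [Matrix.star_dotProduct, hw0, star_zero]
  set b := star x ⬝ᵥ (A *ᵥ w) with hb
  set e := star w ⬝ᵥ (A *ᵥ w) with he
  set p := ‖c‖ with hp
  set r := ‖ι w‖ with hr
  have hAw : ι (A *ᵥ w) = T (ι w) := by
    rw [hT, LinearMap.coe_toContinuousLinearMap']
    exact (Matrix.toEuclideanLin_toLp A w).symm
  have hm : star w ⬝ᵥ w = ((r^2 : ℝ) : ℂ) := by
    rw [← hinner, inner_self_eq_norm_sq_to_K]
    norm_cast
  have hxnorm : ‖ι x‖ = 1 := by
    have h2 : ‖ι x‖^2 = 1 := by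
      have h3 := inner_self_eq_norm_sq (𝕜 := ℂ) (ι x)
      rw [hinner, hx] at h3
      simpa using h3.symm
    nlinarith [norm_nonneg (ι x)]
  have hrw : ‖T (ι w)‖ ≤ ‖T‖ * r := T.le_opNorm (ι w)
  have hbnorm : ‖b‖ ≤ (‖T‖ + 1) * r := by
    have h1 : b = inner ℂ (ι x) (ι (A *ᵥ w)) := (hinner x (A *ᵥ w)).symm
    have h2 : ‖b‖ ≤ ‖ι x‖ * ‖T (ι w)‖ := by rw [h1, hAw]; exact norm_inner_le_norm _ _
    rw [hxnorm, one_mul] at h2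
    calc ‖b‖ = ‖b‖ := rfl
      _ ≤ ‖T‖ * r := le_trans h2 hrw
      _ ≤ (‖T‖ + 1) * r := by nlinarith [norm_nonneg (ι w)]
  have henorm : ‖e‖ ≤ (‖T‖ + 1) * r^2 := by
    have h1 : e = inner ℂ (ι w) (ι (A *ᵥ w)) := (hinner w (A *ᵥ w)).symm
    have h2 : ‖e‖ ≤ ‖ι w‖ * ‖T (ι w)‖ := by rw [h1, hAw]; exact norm_inner_le_norm _ _
    calc ‖e‖ = ‖e‖ := rfl
      _ ≤ r * (‖T‖ * r) := by
          exact le_trans h2 (mul_le_mul_of_nonneg_left hrw (norm_nonneg _))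
      _ ≤ (‖T‖ + 1) * r^2 := by nlinarith [norm_nonneg (ι w)]
  obtain ⟨er, her⟩ : ∃ er : ℝ, e = (er : ℂ) :=
    ⟨e.re, (Complex.conj_eq_iff_re.mp (herm_conj hA w w)).symm⟩
  have her' : e.re = er := by rw [her, Complex.ofReal_re]
  set z := (starRingEnd ℂ) c * b with hz
  have hp2 : ((p^2 : ℝ) : ℂ) = (starRingEnd ℂ) c * c := by
    rw [← Complex.normSq_eq_conj_mul_self]
    norm_cast
    exact Complex.sq_norm c
  have hvx : star v ⬝ᵥ x = (starRingEnd ℂ) c := Matrix.star_dotProduct v x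
  clear_value c w b e z p r
  refine ⟨p, r, z.re, er, by rw [hp]; exact norm_nonneg c, by rw [hr]; exact norm_nonneg _, ?_, ?_, ?_, ?_, ?_⟩
  · calc |z.re| ≤ ‖z‖ := Complex.abs_re_le_norm z
      _ = p * ‖b‖ := by rw [hz, norm_mul, Complex.norm_conj, hp]
      _ ≤ p * ((‖T‖ + 1) * r) := mul_le_mul_of_nonneg_left hbnorm (by rw [hp]; exact norm_nonneg c)
      _ = (‖T‖ + 1) * p * r := by ring
  · calc |er| = |e.re| := by rw [her']
      _ ≤ ‖e‖ := Complex.abs_re_le_norm e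
      _ ≤ (‖T‖ + 1) * r^2 := henorm
  · -- main expansion of ⟨v, A v⟩
    have hwAx : star w ⬝ᵥ (A *ᵥ x) = (starRingEnd ℂ) b := by
      rw [← herm_conj hA x w, hb]
    have hconjz : (starRingEnd ℂ) z = c * (starRingEnd ℂ) b := by
      rw [hz, _root_.map_mul, Complex.conj_conj]
    have h2z : ((2 * z.re + er : ℝ) : ℂ) = (z + (starRingEnd ℂ) z) + e := by
      rw [Complex.add_conj, her]
      push_cast
      ring
    conv_lhs => rw [hv]
    rw [Matrix.mulVec_add, Matrix.mulVec_smul]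
    simp only [star_add, star_smul, add_dotProduct, dotProduct_add, dotProduct_smul,
      smul_dotProduct, smul_eq_mul, ← hb, ← he]
    rw [hwAx, h2z, hp2, hconjz, hz]
    simp only [Complex.star_def]
    ring
  · rw [rankOne_mulVec, dotProduct_smul, smul_eq_mul, hvx, ← hc, hp2]
    ring
  · conv_lhs => rw [hv]
    simp only [star_add, star_smul, add_dotProduct, dotProduct_add, dotProduct_smul,
      smul_dotProduct, smul_eq_mul, hx, hw0, hw0', hm]
    have hcc : c * (starRingEnd ℂ) c = ((p^2 : ℝ) : ℂ) := by
      rw [hp2]; ring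
    simp only [Complex.star_def]
    linear_combination (norm := (push_cast; ring)) hcc

lemma rankOne_herm {d : ℕ} (x : Fin d → ℂ) : (Matrix.vecMulVec x (star x)).IsHermitian := by
  ext i j
  simp [Matrix.conjTranspose_apply, Matrix.vecMulVec_apply, mul_comm]


/-- the two-sided Löwner estimate
`(⟨Ax,x⟩ − t^{−1/2})P + t(P − I) ≤ A ≤ (⟨Ax,x⟩ + t^{−1/2})P + (t/2)(I − P)` for large `t`. -/
theorem loewner_sandwich {d : ℕ} (hd : 2 ≤ d) (A : Matrix (Fin d) (Fin d) ℂ)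
    (hA : A.IsHermitian) (x : Fin d → ℂ) (hx : star x ⬝ᵥ x = 1) :
    ∃ K : ℝ, 0 < K ∧ ∀ t : ℝ, K ≤ t →
      loewnerLE ((qf A x - ((Real.sqrt t)⁻¹ : ℝ)) • rankOneProj x
          + (t : ℂ) • (rankOneProj x - 1)) A ∧
      loewnerLE A ((qf A x + ((Real.sqrt t)⁻¹ : ℝ)) • rankOneProj x
          + ((t / 2 : ℝ) : ℂ) • (1 - rankOneProj x)) := by
  obtain ⟨M, hM1, hdec⟩ := quad_decomp A hA x hx
  have hM0 : (0:ℝ) < M := lt_of_lt_of_le one_pos hM1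
  have hq : (starRingEnd ℂ) (qf A x) = qf A x := herm_conj hA x x
  have hPH : (rankOneProj x).IsHermitian := rankOne_herm x
  have hsmul : ∀ (zc : ℂ) (B : Matrix (Fin d) (Fin d) ℂ),
      (starRingEnd ℂ) zc = zc → B.IsHermitian → (zc • B).IsHermitian := by
    intro zc B hzc hB
    show (zc • B)ᴴ = zc • B
    rw [Matrix.conjTranspose_smul, hB.eq]
    congr 1
  refine ⟨16*M^4 + 4*M, by positivity, fun t ht => ?_⟩
  have ht0 : (0:ℝ) < t := lt_of_lt_of_le (by positivity) ht
  constructor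
  · refine Matrix.PosSemidef.of_dotProduct_mulVec_nonneg ?_ fun v => ?_
    · apply Matrix.IsHermitian.sub hA
      apply Matrix.IsHermitian.add
      · refine hsmul _ _ ?_ hPH
        rw [map_sub, hq, Complex.conj_ofReal]
      · exact hsmul _ _ (Complex.conj_ofReal t) (hPH.sub Matrix.isHermitian_one)
    · obtain ⟨p, r, zre, ere, hp0, hr0, hzb, heb, hAv, hPv, hvv⟩ := hdec v
      have hQ : star v ⬝ᵥ ((A - ((qf A x - ((Real.sqrt t)⁻¹ : ℝ)) • rankOneProj x
            + (t : ℂ) • (rankOneProj x - 1))) *ᵥ v)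
          = (((Real.sqrt t)⁻¹ * p^2 + t*r^2 + (2*zre + ere) : ℝ) : ℂ) := by
        simp only [rankOneProj, qf, Matrix.sub_mulVec, Matrix.add_mulVec,
          Matrix.smul_mulVec, Matrix.one_mulVec, dotProduct_sub, dotProduct_add,
          dotProduct_smul, smul_eq_mul, hAv, hPv, hvv]
        push_cast
        ring
      rw [hQ, Complex.zero_le_real]
      have hkey := key_ineq M t p r hM1 ht hp0 hr0
      nlinarith [neg_abs_le zre, neg_abs_le ere, hzb, heb,
        mul_nonneg ht0.le (sq_nonneg r)]
  · refine Matrix.PosSemidef.of_dotProduct_mulVec_nonneg ?_ fun v => ?_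
    · apply Matrix.IsHermitian.sub _ hA
      apply Matrix.IsHermitian.add
      · refine hsmul _ _ ?_ hPH
        rw [map_add, hq, Complex.conj_ofReal]
      · exact hsmul _ _ (Complex.conj_ofReal _) (Matrix.isHermitian_one.sub hPH)
    · obtain ⟨p, r, zre, ere, hp0, hr0, hzb, heb, hAv, hPv, hvv⟩ := hdec v
      have hQ : star v ⬝ᵥ ((((qf A x + ((Real.sqrt t)⁻¹ : ℝ)) • rankOneProj x
            + ((t / 2 : ℝ) : ℂ) • (1 - rankOneProj x)) - A) *ᵥ v)
          = (((Real.sqrt t)⁻¹ * p^2 + (t/2)*r^2 - (2*zre + ere) : ℝ) : ℂ) := by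
        simp only [rankOneProj, qf, Matrix.sub_mulVec, Matrix.add_mulVec,
          Matrix.smul_mulVec, Matrix.one_mulVec, dotProduct_sub, dotProduct_add,
          dotProduct_smul, smul_eq_mul, hAv, hPv, hvv]
        push_cast
        ring
      rw [hQ, Complex.zero_le_real]
      have hkey := key_ineq M t p r hM1 ht hp0 hr0
      nlinarith [le_abs_self zre, le_abs_self ere, hzb, heb]
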